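/- arXiv:2408.08856 — 7 statements merged into one kernel-verified Lean document; each statement's English description precedes it below -/
import Mathlib

section
/- The polynomial 1 + x + x^2 + ... + x^{k-1} - x^k (for k ≥ 2) has exactly one real root in the interval (1,2). -/
/-- The polynomial `1 + x + x^2 + ... + x^{k-1} - x^k` (for `k ≥ 2`) has exactly one
real root in the interval `(1,2)`. -/
theorem knacci_unique_root_Ioo (k : ℕ) (hk : 2 ≤ k) :
    ∃! x : ℝ, x ∈ Set.Ioo (1 : ℝ) 2 ∧ (∑ i ∈ Finset.range k, x ^ i) - x ^ k = 0 := by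
  set f : ℝ → ℝ := fun x => (∑ i ∈ Finset.range k, x ^ i) - x ^ k with hfdef
  set g : ℝ → ℝ := fun x => ∑ j ∈ Finset.range k, (1/x) ^ (j+1) with hgdef
  have hcont : Continuous f := by
    apply Continuous.sub
    · exact continuous_finset_sum _ fun i _ => continuous_pow i
    · exact continuous_pow k
  have hf1 : f 1 = (k : ℝ) - 1 := by simp [hfdef]
  have hf2 : f 2 = -1 := by
    simp only [hfdef]
    rw [geom_sum_eq (by norm_num : (2:ℝ) ≠ 1)]
    ring
  have hfac : ∀ x : ℝ, 0 < x → f x = x ^ k * (g x - 1) := by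
    intro x hx
    have hxne : x ≠ 0 := ne_of_gt hx
    simp only [hfdef, hgdef]
    rw [mul_sub, mul_one, Finset.mul_sum]
    congr 1
    rw [← Finset.sum_range_reflect (fun i => x ^ i) k]
    apply Finset.sum_congr rfl
    intro j hj
    rw [Finset.mem_range] at hj
    rw [div_pow, one_pow, mul_div_assoc', mul_one,
      eq_div_iff (pow_ne_zero _ hxne), ← pow_add]
    congr 1
    omega
  have hanti : StrictAntiOn g (Set.Ioi (0:ℝ)) := by
    intro a ha b hb hab
    simp only [Set.mem_Ioi] at ha hb
    apply Finset.sum_lt_sum_of_nonempty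
    · exact Finset.nonempty_range_iff.mpr (by omega)
    · intro j _
      apply pow_lt_pow_left₀ _ (by positivity) (by omega)
      exact one_div_lt_one_div_of_lt ha hab
  have hex : ∃ x ∈ Set.Ioo (1:ℝ) 2, f x = 0 := by
    have h := intermediate_value_Ioo' (by norm_num : (1:ℝ) ≤ 2) hcont.continuousOn
    have h0 : (0:ℝ) ∈ Set.Ioo (f 2) (f 1) := by
      rw [hf1, hf2]
      constructor
      · norm_num
      · have : (2:ℝ) ≤ k := by exact_mod_cast hk
        linarith
    obtain ⟨x, hx, hfx⟩ := h h0
    exact ⟨x, hx, hfx⟩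
  obtain ⟨x, hx, hfx⟩ := hex
  refine ⟨x, ⟨hx, hfx⟩, ?_⟩
  rintro y ⟨hy, hfy⟩
  have hxpos : (0:ℝ) < x := lt_trans one_pos hx.1
  have hypos : (0:ℝ) < y := lt_trans one_pos hy.1
  have hgx : g x = 1 := by
    have := hfac x hxpos
    rw [hfx] at this
    have hk0 : x ^ k ≠ 0 := pow_ne_zero _ (ne_of_gt hxpos)
    have := (mul_eq_zero.mp this.symm).resolve_left hk0
    linarith
  have hgy : g y = 1 := by
    have := hfac y hypos
    rw [show f y = 0 from hfy] at this
    have hk0 : y ^ k ≠ 0 := pow_ne_zero _ (ne_of_gt hypos)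
    have := (mul_eq_zero.mp this.symm).resolve_left hk0
    linarith
  exact hanti.injOn (Set.mem_Ioi.mpr hypos) (Set.mem_Ioi.mpr hxpos) (hgy.trans hgx.symm)
end

section
/- The sequence a_i defined by a_i = ∑_{j=0}^{i} F_k(k-1+j) satisfies the recurrence a_{n+k} = a_n + a_{n+1} + ... + a_{n+k-1} + 1 with initial conditions a_i = 2^i for 0 ≤ i ≤ k-1. -/
/-- The sequence `a i = ∑_{j=0}^{i} F_k(k-1+j)` satisfies the recurrence
`a_{n+k} = a_n + ... + a_{n+k-1} + 1` with initial conditions `a_i = 2^i` for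
`0 ≤ i ≤ k-1`, where `F_k` is the k-nacci sequence. -/
theorem knacci_partial_sum_recurrence (k : ℕ) (hk : 2 ≤ k) (F : ℕ → ℕ)
    (hF0 : ∀ i, i < k - 1 → F i = 0) (hF1 : F (k - 1) = 1)
    (hFrec : ∀ n, F (n + k) = ∑ j ∈ Finset.range k, F (n + j)) :
    (∀ i, i ≤ k - 1 → (∑ j ∈ Finset.range (i + 1), F (k - 1 + j)) = 2 ^ i) ∧
    (∀ n, (∑ j ∈ Finset.range (n + k + 1), F (k - 1 + j)) =
      (∑ i ∈ Finset.range k, ∑ j ∈ Finset.range (n + i + 1), F (k - 1 + j)) + 1) := by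
  have ha : ∀ n, (∑ j ∈ Finset.range (n + 1 + 1), F (k - 1 + j)) =
      (∑ j ∈ Finset.range (n + 1), F (k - 1 + j)) + F (n + k) := by
    intro n
    rw [Finset.sum_range_succ]
    congr 2
    omega
  have hinit : ∀ i, i ≤ k - 1 → (∑ j ∈ Finset.range (i + 1), F (k - 1 + j)) = 2 ^ i := by
    intro i hi
    induction i with
    | zero => simp [hF1]
    | succ n ih =>
      have hn : n ≤ k - 1 := by omega
      have hF : F (n + k) = ∑ j ∈ Finset.range (n + 1), F (k - 1 + j) := by
        rw [hFrec]
        have hk' : k = (k - 1 - n) + (n + 1) := by omega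
        rw [hk', Finset.sum_range_add]
        have h0 : ∑ j ∈ Finset.range (k - 1 - n), F (n + j) = 0 := by
          apply Finset.sum_eq_zero
          intro j hj
          simp only [Finset.mem_range] at hj
          exact hF0 _ (by omega)
        rw [h0, zero_add]
        apply Finset.sum_congr rfl
        intro j hj
        congr 1
        omega
      rw [ha, hF, ih hn, pow_succ]
      ring
  refine ⟨hinit, ?_⟩
  have hgeo : ∀ m, (∑ i ∈ Finset.range m, (2 : ℕ) ^ i) + 1 = 2 ^ m := by
    intro m
    induction m with
    | zero => simp
    | succ p ihp => rw [Finset.sum_range_succ, pow_succ]; omega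
  intro n
  induction n with
  | zero =>
    have hk1 : k - 1 + 1 = k := by omega
    have h1 : (∑ j ∈ Finset.range (0 + k + 1), F (k - 1 + j)) =
        (∑ j ∈ Finset.range ((k - 1) + 1 + 1), F (k - 1 + j)) := by
      have h : 0 + k + 1 = (k - 1) + 1 + 1 := by omega
      rw [h]
    rw [h1, ha, hk1]
    have hFk : F (k - 1 + k) = ∑ j ∈ Finset.range k, F (k - 1 + j) := hFrec (k - 1)
    rw [hFk]
    have hak : (∑ j ∈ Finset.range k, F (k - 1 + j)) = 2 ^ (k - 1) := by
      have := hinit (k - 1) le_rfl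
      rwa [hk1] at this
    rw [hak]
    have hr : (∑ i ∈ Finset.range k, ∑ j ∈ Finset.range (0 + i + 1), F (k - 1 + j)) =
        ∑ i ∈ Finset.range k, 2 ^ i := by
      apply Finset.sum_congr rfl
      intro i hi
      simp only [Finset.mem_range] at hi
      rw [zero_add]
      exact hinit i (by omega)
    rw [hr, hgeo]
    have hk2 : k - 1 + 1 = k := by omega
    have : 2 ^ (k - 1) + 2 ^ (k - 1) = 2 ^ k := by
      calc 2 ^ (k - 1) + 2 ^ (k - 1) = 2 ^ (k - 1 + 1) := by rw [pow_succ]; ring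
        _ = 2 ^ k := by rw [hk2]
    omega
  | succ m ih =>
    have h1 : (∑ j ∈ Finset.range (m + 1 + k + 1), F (k - 1 + j)) =
        (∑ j ∈ Finset.range ((m + k) + 1 + 1), F (k - 1 + j)) := by
      have h : m + 1 + k + 1 = (m + k) + 1 + 1 := by omega
      rw [h]
    rw [h1, ha, ih, hFrec]
    have h2 : (∑ i ∈ Finset.range k, ∑ j ∈ Finset.range (m + 1 + i + 1), F (k - 1 + j)) =
        (∑ i ∈ Finset.range k, ((∑ j ∈ Finset.range (m + i + 1), F (k - 1 + j)) + F (m + i + k))) := by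
      apply Finset.sum_congr rfl
      intro i hi
      have : m + 1 + i + 1 = (m + i) + 1 + 1 := by omega
      rw [this, ha]
    rw [h2, Finset.sum_add_distrib]
    have h3 : (∑ j ∈ Finset.range k, F (m + k + j)) = ∑ i ∈ Finset.range k, F (m + i + k) := by
      apply Finset.sum_congr rfl
      intro i hi
      congr 1
      omega
    omega
end

section
/- With S_ℓ(n) = ∑_{j=0}^{ℓ} F_k(n+k-2-j), the identity ∑_{j=1}^{k} S_{k-j}(n) · F_k(k-j+i) = F_k(n+i+k-1) holds for all n ≥ k and i ≥ 0. -/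
/-- With `S_ℓ(n) = ∑_{j=0}^{ℓ} F_k(n+k-2-j)`, the identity
`∑_{j=1}^{k} S_{k-j}(n) · F_k(k-j+i) = F_k(n+i+k-1)` holds for all `n ≥ k`, `i ≥ 0`. -/
theorem knacci_S_identity (k : ℕ) (hk : 2 ≤ k) (F : ℕ → ℕ)
    (hF0 : ∀ i, i < k - 1 → F i = 0) (hF1 : F (k - 1) = 1)
    (hFrec : ∀ n, F (n + k) = ∑ j ∈ Finset.range k, F (n + j))
    (S : ℕ → ℕ → ℕ)
    (hS : ∀ ℓ n, S ℓ n = ∑ j ∈ Finset.range (ℓ + 1), F (n + k - 2 - j)) :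
    ∀ n, k ≤ n → ∀ i : ℕ,
      (∑ j ∈ Finset.range k, S (k - 1 - j) n * F (k - 1 - j + i)) = F (n + i + k - 1) := by
  obtain ⟨K, rfl⟩ : ∃ K, k = K + 2 := ⟨k - 2, by omega⟩
  have hF0' : ∀ i, i < K + 1 → F i = 0 := fun i hi => hF0 i (by omega)
  have hF1' : F (K + 1) = 1 := by
    have : K + 2 - 1 = K + 1 := by omega
    rwa [this] at hF1
  set S' : ℕ → ℕ → ℕ := fun j m => ∑ s ∈ Finset.range (j + 1), F (m + (K + 1 - j) + s)
    with hS'def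
  have key : ∀ m i, (∑ j ∈ Finset.range (K + 2), S' j m * F (j + i)) = F (m + i + (K + 2)) := by
    intro m
    induction m with
    | zero =>
      intro i
      have hr : F (0 + i + (K + 2)) = ∑ j ∈ Finset.range (K + 2), F (i + j) := by
        rw [Nat.zero_add]; exact hFrec i
      rw [hr]
      refine Finset.sum_congr rfl ?_
      intro j hj
      rw [Finset.mem_range] at hj
      have hSj : S' j 0 = 1 := by
        rw [hS'def]
        simp only []
        rw [Finset.sum_range_succ]
        have h1 : ∀ s ∈ Finset.range j, F (0 + (K + 1 - j) + s) = 0 := by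
          intro s hs
          rw [Finset.mem_range] at hs
          exact hF0' _ (by omega)
        rw [Finset.sum_congr rfl h1, Finset.sum_const, smul_eq_mul, Nat.mul_zero, Nat.zero_add]
        have h2 : 0 + (K + 1 - j) + j = K + 1 := by omega
        rw [h2, hF1']
      rw [hSj, Nat.one_mul, Nat.add_comm]
    | succ m ih =>
      intro i
      have rhs : m + 1 + i + (K + 2) = m + (i + 1) + (K + 2) := by omega
      rw [rhs, ← ih (i + 1)]
      rw [Finset.sum_range_succ' (fun j => S' j (m + 1) * F (j + i)) (K + 1)]
      rw [Finset.sum_range_succ (fun j => S' j m * F (j + (i + 1))) (K + 1)]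
      have hshift : ∀ j ∈ Finset.range (K + 1),
          S' (j + 1) (m + 1) * F (j + 1 + i)
            = S' j m * F (j + (i + 1)) + F (m + K + 2) * F (j + 1 + i) := by
        intro j hj
        rw [Finset.mem_range] at hj
        have h1 : S' (j + 1) (m + 1) = S' j m + F (m + K + 2) := by
          rw [hS'def]
          simp only []
          rw [Finset.sum_range_succ]
          congr 1
          · refine Finset.sum_congr rfl ?_
            intro s _
            congr 1
            omega
          · congr 1
            omega
        rw [h1, Nat.add_mul]
        have h2 : j + (i + 1) = j + 1 + i := by omega
        rw [h2]
      rw [Finset.sum_congr rfl hshift, Finset.sum_add_distrib]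
      have hS0 : S' 0 (m + 1) = F (m + K + 2) := by
        have h0 : S' 0 (m + 1) = ∑ s ∈ Finset.range 1, F (m + 1 + (K + 1) + s) := rfl
        rw [h0, Finset.sum_range_one]
        congr 1
        omega
      have hSlast : S' (K + 1) m = F (m + K + 2) := by
        rw [hS'def]
        simp only []
        have h1 : ∀ s ∈ Finset.range (K + 2), F (m + (K + 1 - (K + 1)) + s) = F (m + s) := by
          intro s _
          congr 1
          omega
        rw [Finset.sum_congr rfl h1]
        have h2 : m + K + 2 = m + (K + 2) := by omega
        rw [h2, hFrec m]
      rw [hS0, hSlast]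
      have hsum : F (m + K + 2) * F (0 + i)
            + ∑ j ∈ Finset.range (K + 1), F (m + K + 2) * F (j + 1 + i)
          = F (m + K + 2) * F (K + 1 + (i + 1)) := by
        rw [← Finset.mul_sum, ← Nat.mul_add]
        congr 1
        have h3 : F (0 + i) + ∑ j ∈ Finset.range (K + 1), F (j + 1 + i)
            = ∑ j ∈ Finset.range (K + 2), F (i + j) := by
          rw [Finset.sum_range_succ' (fun j => F (i + j)) (K + 1)]
          rw [Nat.add_comm]
          congr 1
          · refine Finset.sum_congr rfl ?_
            intro j _
            congr 1
            omega
          · congr 1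
            omega
        rw [h3, ← hFrec i]
        congr 1
        omega
      omega
  intro n hn i
  have hrefl : ∑ j ∈ Finset.range (K + 2), S (K + 2 - 1 - j) n * F (K + 2 - 1 - j + i)
      = ∑ j ∈ Finset.range (K + 2), S j n * F (j + i) := by
    exact Finset.sum_range_reflect (fun j => S j n * F (j + i)) (K + 2)
  rw [hrefl]
  have hSS : ∀ j ∈ Finset.range (K + 2), S j n * F (j + i) = S' j (n - 1) * F (j + i) := by
    intro j hj
    rw [Finset.mem_range] at hj
    congr 1
    rw [hS, hS'def]
    simp only []
    have := Finset.sum_range_reflect (fun s => F (n - 1 + (K + 1 - j) + s)) (j + 1)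
    rw [← this]
    refine Finset.sum_congr rfl ?_
    intro t ht
    rw [Finset.mem_range] at ht
    congr 1
    omega
  rw [Finset.sum_congr rfl hSS, key (n - 1) i]
  congr 1
  omega
end

section
/- All roots of the polynomial 1 + x + ... + x^{k-1} - x^k other than the k-nacci constant φ_k lie strictly inside the unit circle in the complex plane, for k ≥ 2. -/
/-- Unimodality: `t ↦ t^k (2 - t)` increases up to `2k/(k+1)` then decreases,
so it cannot take the value `1` at two distinct points both `> 1`
(since it already equals `1` at `t = 1`). -/
lemma knacci_unimodal (k : ℕ) (hk : 2 ≤ k) {a b : ℝ} (ha : 1 < a) (hab : a < b)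
    (hfa : a ^ k * (2 - a) = 1) (hfb : b ^ k * (2 - b) = 1) : False := by
  have hk1 : (2 : ℝ) ≤ (k : ℝ) := by exact_mod_cast hk
  set m : ℝ := 2 * k / (k + 1) with hm
  have hkpos : (0 : ℝ) < (k : ℝ) + 1 := by linarith
  have hm1 : 1 < m := by
    rw [hm, lt_div_iff₀ hkpos]; linarith
  set f : ℝ → ℝ := fun t => 2 * t ^ k - t ^ (k + 1) with hf
  have hfeq : ∀ t : ℝ, f t = t ^ k * (2 - t) := by
    intro t; simp only [hf, pow_succ]; ring
  have hd : ∀ t : ℝ, HasDerivAt f (t ^ (k - 1) * (2 * k - (k + 1) * t)) t := by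
    intro t
    have h3 : HasDerivAt f (2 * ((k : ℝ) * t ^ (k - 1)) - ((k + 1 : ℕ) : ℝ) * t ^ (k + 1 - 1)) t :=
      ((hasDerivAt_pow k t).const_mul (2 : ℝ)).sub (hasDerivAt_pow (k + 1) t)
    have hkk : k - 1 + 1 = k := by omega
    have e : t ^ k = t ^ (k - 1) * t := by rw [← pow_succ, hkk]
    have heq : 2 * ((k : ℝ) * t ^ (k - 1)) - ((k + 1 : ℕ) : ℝ) * t ^ (k + 1 - 1)
        = t ^ (k - 1) * (2 * k - (k + 1) * t) := by
      simp only [Nat.add_sub_cancel]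
      rw [e]; push_cast; ring
    exact heq ▸ h3
  have hcont : Continuous f := by fun_prop
  have mono : StrictMonoOn f (Set.Icc 1 m) := by
    apply strictMonoOn_of_deriv_pos (convex_Icc 1 m) hcont.continuousOn
    intro t ht
    rw [interior_Icc] at ht
    rw [(hd t).deriv]
    have ht0 : (0 : ℝ) < t := lt_trans one_pos ht.1
    have h1 : 0 < t ^ (k - 1) := pow_pos ht0 _
    have h2 : (k + 1 : ℝ) * t < 2 * k := by
      have h' := ht.2
      rw [hm, lt_div_iff₀ hkpos] at h'
      linarith
    have : 0 < 2 * (k : ℝ) - (k + 1) * t := by linarith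
    positivity
  have anti : StrictAntiOn f (Set.Ici m) := by
    apply strictAntiOn_of_deriv_neg (convex_Ici m) hcont.continuousOn
    intro t ht
    rw [interior_Ici] at ht
    rw [(hd t).deriv]
    have ht0 : (0 : ℝ) < t := lt_trans (lt_trans one_pos hm1) ht
    have h1 : 0 < t ^ (k - 1) := pow_pos ht0 _
    have h2 : 2 * (k : ℝ) < (k + 1) * t := by
      have h' := Set.mem_Ioi.mp ht
      rw [hm, div_lt_iff₀ hkpos] at h'
      linarith
    exact mul_neg_of_pos_of_neg h1 (by linarith)
  have hf1 : f 1 = 1 := by simp [hf]; norm_num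
  rcases le_or_gt a m with h | h
  · have := mono ⟨le_refl 1, hm1.le⟩ ⟨ha.le, h⟩ ha
    rw [hf1, hfeq, hfa] at this
    exact lt_irrefl 1 this
  · have := anti (Set.mem_Ici.mpr h.le) (Set.mem_Ici.mpr (h.trans hab).le) hab
    rw [hfeq, hfeq, hfa, hfb] at this
    exact lt_irrefl 1 this

/-- All roots of `1 + x + ... + x^{k-1} - x^k` other than the k-nacci constant `φ_k`
lie strictly inside the unit circle in the complex plane, for `k ≥ 2`. -/
theorem knacci_other_roots_in_unit_disc (k : ℕ) (hk : 2 ≤ k)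
    (φ : ℝ) (hφ : φ ∈ Set.Ioo (1 : ℝ) 2)
    (hroot : (∑ i ∈ Finset.range k, φ ^ i) - φ ^ k = 0) :
    ∀ z : ℂ, (∑ i ∈ Finset.range k, z ^ i) - z ^ k = 0 → z ≠ (φ : ℂ) →
      ‖z‖ < 1 := by
  intro z hz hne
  by_contra hcon
  push_neg at hcon
  set r : ℝ := ‖z‖ with hr
  have hr1 : 1 ≤ r := hcon
  have hrpos : (0 : ℝ) < r := lt_of_lt_of_le one_pos hr1
  have hrk : (0 : ℝ) < r ^ k := pow_pos hrpos k
  -- z^k (2 - z) = 1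
  have Gz : (∑ i ∈ Finset.range k, z ^ i) * (z - 1) = z ^ k - 1 := geom_sum_mul z k
  have hq : z ^ k * (2 - z) = 1 := by linear_combination (z - 1) * hz - Gz
  -- φ^k (2 - φ) = 1
  have Gφ : (∑ i ∈ Finset.range k, φ ^ i) * (φ - 1) = φ ^ k - 1 := geom_sum_mul φ k
  have hφq : φ ^ k * (2 - φ) = 1 := by linear_combination (φ - 1) * hroot - Gφ
  -- |z^k| |2 - z| = 1
  have habs : r ^ k * ‖2 - z‖ = 1 := by
    have := congrArg norm hq
    simpa [norm_mul, norm_pow] using this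
  -- triangle inequality
  have hz' : (∑ i ∈ Finset.range k, z ^ i) = z ^ k := by
    linear_combination hz
  have tri : r ^ k ≤ ∑ i ∈ Finset.range k, r ^ i := by
    calc r ^ k = ‖z ^ k‖ := by rw [norm_pow]
      _ = ‖∑ i ∈ Finset.range k, z ^ i‖ := by rw [hz']
      _ ≤ ∑ i ∈ Finset.range k, ‖z ^ i‖ := norm_sum_le _ _
      _ = ∑ i ∈ Finset.range k, r ^ i := by simp [norm_pow, hr]
  -- r^k (2 - r) ≥ 1
  have Gr : (∑ i ∈ Finset.range k, r ^ i) * (r - 1) = r ^ k - 1 := geom_sum_mul r k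
  have key : r ^ k * (r - 1) ≤ r ^ k - 1 := by
    have := mul_le_mul_of_nonneg_right tri (by linarith : (0 : ℝ) ≤ r - 1)
    rw [Gr] at this
    exact this
  have Hr : 1 ≤ r ^ k * (2 - r) := by nlinarith [key]
  -- equality chain
  have hrez : z.re ≤ r := Complex.re_le_norm z
  have c1 : r ^ k * (2 - r) ≤ r ^ k * (2 - z.re) :=
    mul_le_mul_of_nonneg_left (by linarith) hrk.le
  have hre2 : 2 - z.re ≤ ‖2 - z‖ := by
    have := Complex.re_le_norm (2 - z)
    simpa using this
  have c2 : r ^ k * (2 - z.re) ≤ r ^ k * ‖2 - z‖ :=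
    mul_le_mul_of_nonneg_left hre2 hrk.le
  have e1 : r ^ k * (2 - r) = 1 :=
    le_antisymm (by calc r ^ k * (2 - r) ≤ r ^ k * (2 - z.re) := c1
      _ ≤ r ^ k * ‖2 - z‖ := c2
      _ = 1 := habs) Hr
  have e2 : r ^ k * (2 - z.re) = 1 :=
    le_antisymm (c2.trans_eq habs) (e1 ▸ c1)
  -- z.re = r
  have hzre : z.re = r := by
    have : r ^ k * (2 - r) = r ^ k * (2 - z.re) := by rw [e1, e2]
    have := mul_left_cancel₀ (ne_of_gt hrk) this
    linarith
  -- z.im = 0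
  have habs2 : ‖2 - z‖ = 2 - z.re := by
    have : r ^ k * ‖2 - z‖ = r ^ k * (2 - z.re) := by rw [habs, e2]
    exact mul_left_cancel₀ (ne_of_gt hrk) this
  have hzim : z.im = 0 := by
    have hsq := Complex.sq_norm (2 - z)
    rw [habs2] at hsq
    simp [Complex.normSq_apply, Complex.sub_re, Complex.sub_im] at hsq
    have : z.im ^ 2 = 0 := by nlinarith [hsq]
    exact pow_eq_zero_iff (n := 2) (by norm_num) |>.mp this
  have hzr : z = (r : ℂ) := Complex.ext (by simp [hzre]) (by simp [hzim])
  -- rule out r = 1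
  have hr_ne_one : r ≠ 1 := by
    intro h1
    rw [hzr, h1] at hz
    have : (k : ℂ) - 1 = 0 := by simpa using hz
    have : (k : ℂ) = 1 := by linear_combination this
    have : k = 1 := by exact_mod_cast this
    omega
  have hr_gt : 1 < r := lt_of_le_of_ne hr1 (Ne.symm hr_ne_one)
  -- rule out r = φ
  have hr_ne_φ : r ≠ φ := by
    intro h1
    apply hne
    rw [hzr, h1]
  rcases lt_or_gt_of_ne hr_ne_φ with h | h
  · exact knacci_unimodal k hk hr_gt h e1 hφq
  · exact knacci_unimodal k hk hφ.1 h hφq e1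
end

section
/- All complex roots of 1 + x + ... + x^{k-1} - x^k are simple (the polynomial is separable), for k ≥ 2. -/
open Polynomial

private lemma aux1 (m : ℕ) : ((m : ℝ) + 3) / 2 < (4 / 3) ^ (m + 2) := by
  induction m with
  | zero => norm_num
  | succ n ih =>
    have : ((4:ℝ)/3) ^ (n + 3) = (4/3) * (4/3) ^ (n + 2) := by ring
    push_cast
    rw [show n + 1 + 2 = n + 3 from rfl, this]
    push_cast at ih
    nlinarith [ih, Nat.cast_nonneg (α := ℝ) n]

private lemma aux2 (m : ℕ) : ((m : ℝ) + 3) ^ (m + 3) < 2 * (2 * ((m : ℝ) + 2)) ^ (m + 2) := by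
  have hP : (0:ℝ) < ((m : ℝ) + 3) ^ (m + 2) := by positivity
  have h1 : ((4:ℝ)/3 * ((m:ℝ) + 3)) ^ (m + 2) ≤ (2 * ((m : ℝ) + 2)) ^ (m + 2) := by
    apply pow_le_pow_left₀ (by positivity)
    nlinarith [Nat.cast_nonneg (α := ℝ) m]
  have h2 : ((4:ℝ)/3 * ((m:ℝ) + 3)) ^ (m + 2) = (4/3) ^ (m + 2) * ((m:ℝ) + 3) ^ (m + 2) :=
    mul_pow _ _ _
  have h3 := aux1 m
  calc ((m : ℝ) + 3) ^ (m + 3) = ((m:ℝ) + 3) * ((m:ℝ) + 3) ^ (m + 2) := by ring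
    _ < 2 * ((4/3) ^ (m + 2) * ((m:ℝ) + 3) ^ (m + 2)) := by nlinarith [h3, hP]
    _ = 2 * ((4:ℝ)/3 * ((m:ℝ) + 3)) ^ (m + 2) := by rw [h2]
    _ ≤ 2 * (2 * ((m : ℝ) + 2)) ^ (m + 2) := by linarith [h1]

open Polynomial in
/-- All complex roots of `1 + x + ... + x^{k-1} - x^k` are simple: the polynomial
is separable, for `k ≥ 2`. -/
theorem knacci_poly_separable (k : ℕ) (hk : 2 ≤ k) :
    ((∑ i ∈ Finset.range k, (X : Polynomial ℂ) ^ i) - X ^ k).Separable := by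
  obtain ⟨m, rfl⟩ : ∃ m, k = m + 2 := ⟨k - 2, by omega⟩
  set p : ℂ[X] := (∑ i ∈ Finset.range (m + 2), (X : Polynomial ℂ) ^ i) - X ^ (m + 2) with hpdef
  rw [Polynomial.separable_def]
  rw [Polynomial.isCoprime_iff_aeval_ne_zero_of_isAlgClosed (k := ℂ) ℂ]
  intro a
  by_contra hcon
  push_neg at hcon
  obtain ⟨hp, hp'⟩ := hcon
  have key : ((X : ℂ[X]) - 1) * p = 2 * X ^ (m + 2) - X ^ (m + 3) - 1 := by
    have hg := geom_sum_mul (X : ℂ[X]) (m + 2)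
    rw [hpdef]
    linear_combination hg
  -- evaluate key at a
  have hq : 2 * a ^ (m + 2) - a ^ (m + 3) - 1 = 0 := by
    have h := congrArg (aeval a) key
    rw [map_mul, hp, mul_zero] at h
    simpa using h.symm
  -- evaluate derivative of key at a
  have hq' : 2 * ((m:ℂ) + 2) * a ^ (m + 1) - ((m:ℂ) + 3) * a ^ (m + 2) = 0 := by
    have h := congrArg (fun q => aeval a (derivative q)) key
    simp only [derivative_mul, derivative_sub, derivative_one, derivative_X, derivative_X_pow,
      one_mul, map_add, map_mul, map_sub, hp, hp', mul_zero, zero_mul, add_zero, zero_add] at h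
    simp only [derivative_ofNat, zero_mul, map_zero, Nat.add_sub_cancel, zero_add,
      map_pow, map_ofNat, aeval_X, map_natCast, map_one, map_add, sub_zero] at h
    push_cast at h
    linear_combination -h
  have ha0 : a ≠ 0 := by
    rintro rfl
    simp at hq
  have hak : ((m:ℂ) + 3) * a = 2 * ((m:ℂ) + 2) := by
    have h3 : a ^ (m + 1) * (2 * ((m:ℂ) + 2) - ((m:ℂ) + 3) * a) = 0 := by
      linear_combination hq'
    rcases mul_eq_zero.mp h3 with h | h
    · exact absurd h (pow_ne_zero _ ha0)
    · linear_combination -h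
  have hpow : ((m:ℂ) + 3) ^ (m + 2) * a ^ (m + 2) = (2 * ((m:ℂ) + 2)) ^ (m + 2) := by
    rw [← mul_pow, hak]
  have final : ((m:ℂ) + 3) ^ (m + 3) = 2 * (2 * ((m:ℂ) + 2)) ^ (m + 2) := by
    linear_combination 2 * hpow - ((m:ℂ) + 3) ^ (m + 2) * ((m:ℂ) + 3) * hq
      - ((m:ℂ) + 3) ^ (m + 2) * a ^ (m + 2) * hak
  have hnat : (m + 3) ^ (m + 3) = 2 * (2 * (m + 2)) ^ (m + 2) := by
    have : (((m + 3) ^ (m + 3) : ℕ) : ℂ) = ((2 * (2 * (m + 2)) ^ (m + 2) : ℕ) : ℂ) := by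
      push_cast
      linear_combination final
    exact_mod_cast this
  have hreal : ((m : ℝ) + 3) ^ (m + 3) = 2 * (2 * ((m : ℝ) + 2)) ^ (m + 2) := by
    have : (((m + 3) ^ (m + 3) : ℕ) : ℝ) = ((2 * (2 * (m + 2)) ^ (m + 2) : ℕ) : ℝ) := by
      exact_mod_cast congrArg (Nat.cast : ℕ → ℝ) hnat
    push_cast at this
    linarith [this]
  linarith [aux2 m, hreal]
end

section
/- For k ≥ 2 and positive integers m, M with M = ⌊m/(φ_k − 1)⌋, there exists N such that for all i ≥ N, F_k(k+i)·M − (∑_{j=0}^{i} F_k(k−1+j))·m ≤ 0. -/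
/-- For `k ≥ 2` and positive integers `m, M` with `M = ⌊m/(φ_k − 1)⌋`, there exists
`N` such that for all `i ≥ N`, `F_k(k+i)·M − (∑_{j=0}^{i} F_k(k−1+j))·m ≤ 0`. -/
theorem row_one_checkers_eventually_nonpos (k : ℕ) (hk : 2 ≤ k) (F : ℕ → ℕ)
    (hF0 : ∀ i, i < k - 1 → F i = 0) (hF1 : F (k - 1) = 1)
    (hFrec : ∀ n, F (n + k) = ∑ j ∈ Finset.range k, F (n + j))
    (φ : ℝ) (hφ : φ ∈ Set.Ioo (1 : ℝ) 2)
    (hroot : ∑ i ∈ Finset.range k, φ ^ i = φ ^ k)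
    (hasymp : ∃ c : ℝ, 0 < c ∧
      Filter.Tendsto (fun n => (F n : ℝ) / φ ^ n) Filter.atTop (nhds c))
    (m M : ℕ) (hm : 0 < m) (hM : 0 < M) (hMdef : M = ⌊(m : ℝ) / (φ - 1)⌋₊) :
    ∃ N : ℕ, ∀ i, N ≤ i →
      (F (k + i) : ℝ) * M - (∑ j ∈ Finset.range (i + 1), (F (k - 1 + j) : ℝ)) * m ≤ 0 := by
  obtain ⟨hφ1, hφ2⟩ := hφ
  have hφ0 : (0:ℝ) < φ := by linarith
  have hφm1 : (0:ℝ) < φ - 1 := by linarith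
  obtain ⟨c, hc, hlim⟩ := hasymp
  have hpoly : φ^(k+1) + 1 = 2*φ^k := by
    have h := geom_sum_mul φ k
    rw [hroot] at h
    linear_combination h
  have hm' : (0:ℝ) < m := by exact_mod_cast hm
  have hM' : (0:ℝ) < M := by exact_mod_cast hM
  have hMle : (M:ℝ) * (φ-1) ≤ m := by
    have h1 : (M:ℝ) ≤ (m:ℝ)/(φ-1) := by
      rw [hMdef]; exact Nat.floor_le (by positivity)
    calc (M:ℝ)*(φ-1) ≤ ((m:ℝ)/(φ-1))*(φ-1) := by nlinarith
    _ = m := div_mul_cancel₀ _ (ne_of_gt hφm1)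
  have hMlt : (M:ℝ)*(φ-1) < m := by
    rcases lt_or_eq_of_le hMle with h | heq
    · exact h
    · exfalso
      have hdM : Nat.gcd M m ∣ M := Nat.gcd_dvd_left M m
      have hdm : Nat.gcd M m ∣ m := Nat.gcd_dvd_right M m
      set d := Nat.gcd M m with hd
      have hd0 : 0 < d := Nat.gcd_pos_of_pos_left m hM
      set b := M / d with hbdef
      set a0 := m / d with ha0def
      have hbM : d * b = M := Nat.mul_div_cancel' hdM
      have ham : d * a0 = m := Nat.mul_div_cancel' hdm
      have hb0 : 0 < b := by
        rcases Nat.eq_zero_or_pos b with h0 | h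
        · rw [h0, mul_zero] at hbM; omega
        · exact h
      have ha00 : 0 < a0 := by
        rcases Nat.eq_zero_or_pos a0 with h0 | h
        · rw [h0, mul_zero] at ham; omega
        · exact h
      have cop : Nat.Coprime b a0 := Nat.coprime_div_gcd_div_gcd hd0
      have hMr : (M:ℝ) = (d:ℝ)*(b:ℝ) := by exact_mod_cast congrArg (Nat.cast : ℕ → ℝ) hbM.symm
      have hmr : (m:ℝ) = (d:ℝ)*(a0:ℝ) := by exact_mod_cast congrArg (Nat.cast : ℕ → ℝ) ham.symm
      have hd0' : (0:ℝ) < d := by exact_mod_cast hd0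
      rw [hMr, hmr] at heq
      have hba : (b:ℝ) * φ = ((b + a0 : ℕ) : ℝ) := by
        push_cast
        have h2 : (d:ℝ) * ((b:ℝ)*φ) = (d:ℝ) * ((b:ℝ) + (a0:ℝ)) := by linear_combination heq
        have := mul_left_cancel₀ (ne_of_gt hd0') h2
        linarith
      have keyR : ((b+a0:ℕ):ℝ)^(k+1) + (b:ℝ)^(k+1) = 2*((b+a0:ℕ):ℝ)^k*(b:ℝ) := by
        rw [← hba]
        linear_combination ((b:ℝ))^(k+1) * hpoly
      have keyN : (b+a0)^(k+1) + b^(k+1) = 2*(b+a0)^k*b := by exact_mod_cast keyR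
      have h2 : b ∣ b^(k+1) := dvd_pow_self b (by omega)
      have hdvd : b ∣ (b+a0)^(k+1) := by
        have h1 : b ∣ (b+a0)^(k+1) + b^(k+1) := by
          rw [keyN]; exact dvd_mul_left b (2*(b+a0)^k)
        have h3 : (b+a0)^(k+1) = ((b+a0)^(k+1) + b^(k+1)) - b^(k+1) := by omega
        rw [h3]; exact Nat.dvd_sub h1 h2
      have copa : Nat.Coprime b (b+a0) := by
        exact (Nat.coprime_self_add_right).mpr cop
      have hb1 : b = 1 := (copa.pow_right (k+1)).eq_one_of_dvd hdvd
      rw [hb1] at keyN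
      have ha2 : 2 ≤ 1 + a0 := by omega
      have hpow : 2*(1+a0)^k ≤ (1+a0)^(k+1) := by
        calc 2*(1+a0)^k = (1+a0)^k * 2 := by ring
        _ ≤ (1+a0)^k * (1+a0) := Nat.mul_le_mul_left _ ha2
        _ = (1+a0)^(k+1) := (pow_succ _ _).symm
      simp only [one_pow, mul_one] at keyN
      linarith [keyN, hpow]
  -- analytic part
  set t := (m:ℝ) - M*(φ-1) with htdef
  have ht : 0 < t := by rw [htdef]; linarith
  set D := (m:ℝ) + M*(φ-1) with hDdef
  have hD0 : 0 < D := by rw [hDdef]; nlinarith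
  set ε := c*t/(2*D) with hεdef
  have hε0 : 0 < ε := by rw [hεdef]; positivity
  have hεc : ε < c := by
    have h2D : t < 2*D := by rw [htdef, hDdef]; nlinarith [mul_pos hM' hφm1]
    rw [hεdef, div_lt_iff₀ (by positivity)]
    nlinarith [mul_pos hc (show (0:ℝ) < 2*D - t by linarith)]
  obtain ⟨N₁, hN₁⟩ := Metric.tendsto_atTop.mp hlim ε hε0
  have hlow : ∀ n, N₁ ≤ n → (c-ε)*φ^n ≤ (F n : ℝ) := by
    intro n hn
    have h := hN₁ n hn
    rw [Real.dist_eq, abs_lt] at h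
    have hpn : (0:ℝ) < φ^n := pow_pos hφ0 n
    have h2 : c - ε < (F n:ℝ)/φ^n := by linarith [h.1]
    exact le_of_lt ((lt_div_iff₀ hpn).mp h2)
  have hup : ∀ n, N₁ ≤ n → (F n : ℝ) ≤ (c+ε)*φ^n := by
    intro n hn
    have h := hN₁ n hn
    rw [Real.dist_eq, abs_lt] at h
    have hpn : (0:ℝ) < φ^n := pow_pos hφ0 n
    have h2 : (F n:ℝ)/φ^n < c + ε := by linarith [h.2]
    exact le_of_lt ((div_lt_iff₀ hpn).mp h2)
  set C0 := φ^(k-1+N₁) with hC0def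
  have hC0 : (0:ℝ) < C0 := pow_pos hφ0 _
  set B := c*m*C0/(c*t/2) with hBdef
  obtain ⟨N₂, hN₂⟩ := Filter.eventually_atTop.mp
    ((tendsto_pow_atTop_atTop_of_one_lt hφ1).eventually_ge_atTop B)
  refine ⟨max N₁ N₂, fun i hi => ?_⟩
  have hiN₁ : N₁ ≤ i := le_trans (le_max_left _ _) hi
  have hiN₂ : N₂ ≤ i := le_trans (le_max_right _ _) hi
  have hFup : (F (k+i):ℝ) ≤ (c+ε)*φ^(k+i) := hup _ (by omega)
  set G := ∑ j ∈ Finset.Ico N₁ (i+1), φ^(k-1+j) with hGdef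
  have hS2 : (c-ε)*G ≤ ∑ j ∈ Finset.Ico N₁ (i+1), ((F (k-1+j)):ℝ) := by
    rw [hGdef, Finset.mul_sum]
    apply Finset.sum_le_sum
    intro j hj
    rw [Finset.mem_Ico] at hj
    exact hlow (k-1+j) (by omega)
  have hS1 : ∑ j ∈ Finset.Ico N₁ (i+1), ((F (k-1+j)):ℝ)
      ≤ ∑ j ∈ Finset.range (i+1), ((F (k-1+j)):ℝ) := by
    apply Finset.sum_le_sum_of_subset_of_nonneg
    · intro x hx
      rw [Finset.mem_Ico] at hx
      rw [Finset.mem_range]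
      omega
    · intro j _ _; exact Nat.cast_nonneg _
  have hgeo : G * (φ-1) = φ^(k+i) - C0 := by
    have h1 : (∑ j ∈ Finset.Ico N₁ (i+1), φ^j) * (φ-1) = φ^(i+1) - φ^(N₁) := by
      rw [Finset.sum_Ico_eq_sub _ (by omega : N₁ ≤ i+1), sub_mul, geom_sum_mul, geom_sum_mul]
      ring
    have h2 : G = φ^(k-1) * ∑ j ∈ Finset.Ico N₁ (i+1), φ^j := by
      rw [hGdef, Finset.mul_sum]
      exact Finset.sum_congr rfl fun j _ => pow_add φ (k-1) j
    have e1 : k-1+(i+1) = k+i := by omega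
    rw [h2, mul_assoc, h1, mul_sub, ← pow_add, ← pow_add, e1, hC0def]
  have hγ : (c-ε)*m - (c+ε)*M*(φ-1) = c*t/2 := by
    rw [hεdef]
    field_simp
    rw [htdef, hDdef]
    ring
  have hφki : B ≤ φ^(k+i) :=
    le_trans (hN₂ i hiN₂) (pow_le_pow_right₀ hφ1.le (by omega))
  have hγ0 : (0:ℝ) < c*t/2 := by positivity
  have hB : c*m*C0 ≤ c*t/2 * φ^(k+i) := by
    have hBe : c*t/2 * B = c*m*C0 := by
      rw [hBdef]; field_simp
    calc c*m*C0 = c*t/2*B := hBe.symm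
    _ ≤ c*t/2*φ^(k+i) := mul_le_mul_of_nonneg_left hφki hγ0.le
  have hεm : (c-ε)*m*C0 ≤ c*m*C0 := by
    have hprod : 0 ≤ ε*((m:ℝ)*C0) := mul_nonneg hε0.le (mul_nonneg hm'.le hC0.le)
    have he : (c-ε)*(m:ℝ)*C0 = c*(m:ℝ)*C0 - ε*((m:ℝ)*C0) := by ring
    linarith
  have hmain : (c+ε)*φ^(k+i)*M*(φ-1) ≤ (c-ε)*m*(φ^(k+i) - C0) := by
    have h' : ((c-ε)*m - (c+ε)*M*(φ-1))*φ^(k+i) = c*t/2*φ^(k+i) := by rw [hγ]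
    linarith [h', hB, hεm]
  have hdiv : (c+ε)*φ^(k+i)*M ≤ (c-ε)*G*m := by
    have h2 : (c-ε)*G*m*(φ-1) = (c-ε)*m*(φ^(k+i)-C0) := by
      rw [show (c-ε)*G*m*(φ-1) = (c-ε)*m*(G*(φ-1)) from by ring, hgeo]
    have h3 : (c+ε)*φ^(k+i)*M*(φ-1) ≤ (c-ε)*G*m*(φ-1) := by rw [h2]; exact hmain
    exact le_of_mul_le_mul_right h3 hφm1
  have f1 : (F (k+i):ℝ)*M ≤ (c+ε)*φ^(k+i)*M :=
    mul_le_mul_of_nonneg_right hFup (Nat.cast_nonneg M)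
  have f2 : (c-ε)*G*m ≤ (∑ j ∈ Finset.range (i+1), ((F (k-1+j)):ℝ))*m :=
    mul_le_mul_of_nonneg_right (le_trans hS2 hS1) (Nat.cast_nonneg m)
  linarith [f1, hdiv, f2]
end

section
/- For k ≥ 2 and integers m > 1, n with φ_k^{n−1} ≤ m/(φ_k − 1), there exists N such that for all i ≥ N, F_k(n+i+k−1) − (∑_{j=0}^{i} F_k(k−1+j))·m ≤ 0. -/
open Finset

section
variable (k : ℕ) (φ : ℝ)

private noncomputable def gfun : ℝ → ℝ := fun r => 2*r^k - r^(k+1)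

private lemma gderiv (x : ℝ) :
    HasDerivAt (gfun k) (2*k*x^(k-1) - (k+1)*x^k) x := by
  have h1 : HasDerivAt (fun r : ℝ => r^k) ((k:ℝ)*x^(k-1)) x := hasDerivAt_pow k x
  have h2 : HasDerivAt (fun r : ℝ => r^(k+1)) (((k:ℝ)+1)*x^k) x := by
    simpa using hasDerivAt_pow (k+1) x
  have := (h1.const_mul (2:ℝ)).sub h2
  exact this.congr_deriv (by ring)

private lemma gcont : Continuous (gfun k) := by
  unfold gfun; continuity

variable (hk : 2 ≤ k)
include hk

private lemma hc01 : (1:ℝ) < 2*(k:ℝ)/((k:ℝ)+1) := by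
  rw [lt_div_iff₀ (by positivity)]
  have : (2:ℝ) ≤ (k:ℝ) := by exact_mod_cast hk
  nlinarith

private lemma ganti : StrictAntiOn (gfun k) (Set.Ici (2*(k:ℝ)/((k:ℝ)+1))) := by
  apply strictAntiOn_of_deriv_neg (convex_Ici _) (gcont k).continuousOn
  intro x hx
  rw [interior_Ici] at hx
  have hx1 : (1:ℝ) < x := lt_trans (hc01 k hk) hx
  rw [(gderiv k x).deriv]
  have hxk : x^k = x^(k-1) * x := by
    conv_lhs => rw [show k = (k-1)+1 by omega]
    ring
  have hxpos : (0:ℝ) < x^(k-1) := by positivity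
  have hgt : 2*(k:ℝ) < ((k:ℝ)+1) * x := by
    rw [Set.mem_Ioi, div_lt_iff₀ (by positivity)] at hx
    nlinarith [hx]
  calc 2*(k:ℝ)*x^(k-1) - ((k:ℝ)+1)*x^k = x^(k-1) * (2*k - ((k:ℝ)+1)*x) := by rw [hxk]; ring
  _ < 0 := by nlinarith

private lemma gmono : StrictMonoOn (gfun k) (Set.Icc 1 (2*(k:ℝ)/((k:ℝ)+1))) := by
  apply strictMonoOn_of_deriv_pos (convex_Icc _ _) (gcont k).continuousOn
  intro x hx
  rw [interior_Icc] at hx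
  have hx1 : (1:ℝ) < x := hx.1
  rw [(gderiv k x).deriv]
  have hxk : x^k = x^(k-1) * x := by
    conv_lhs => rw [show k = (k-1)+1 by omega]
    ring
  have hxpos : (0:ℝ) < x^(k-1) := by positivity
  have hlt : ((k:ℝ)+1) * x < 2*(k:ℝ) := by
    have := hx.2
    rw [lt_div_iff₀ (by positivity)] at this
    nlinarith [this]
  calc 2*(k:ℝ)*x^(k-1) - ((k:ℝ)+1)*x^k = x^(k-1) * (2*k - ((k:ℝ)+1)*x) := by rw [hxk]; ring
  _ > 0 := by nlinarith

end

section
variable (k : ℕ) (hk : 2 ≤ k) (φ : ℝ) (hφ1 : 1 < φ) (hφ2 : φ < 2)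
  (hroot : ∑ i ∈ Finset.range k, φ ^ i = φ ^ k)
include hk hφ1 hφ2 hroot

private lemma hpk : φ ^ k * (2 - φ) = 1 := by
  have h := geom_sum_mul φ k
  rw [hroot] at h
  nlinarith [h]

private lemma hgold : φ + 1 ≤ φ ^ 2 := by
  have hpk' := hpk k hk φ hφ1 hφ2 hroot
  have h2 : φ ^ 2 ≤ φ ^ k := pow_le_pow_right₀ (le_of_lt hφ1) hk
  have h3 : φ ^ 2 * (2 - φ) ≤ 1 := by nlinarith
  nlinarith [sq_nonneg (φ - 1), mul_pos (sub_pos.2 hφ1) (sub_pos.2 hφ1)]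

private lemma h32 : 3/2 < φ := by
  have := hgold k hk φ hφ1 hφ2 hroot
  nlinarith

private lemma hhalfpow (j : ℕ) (hj : 2 ≤ j) : ((j:ℝ) + 1)/2 < (3/2)^j := by
  clear hk hφ1 hφ2 hroot
  induction j with
  | zero => omega
  | succ i ih =>
    rcases Nat.lt_or_ge i 2 with h | h
    · interval_cases i
      · omega
      · norm_num
    · have hi := ih h
      have hi2 : (2:ℝ) ≤ (i:ℝ) := by exact_mod_cast h
      have hmul := mul_lt_mul_of_pos_left hi (by norm_num : (0:ℝ) < 3/2)
      have : ((3:ℝ)/2)^(i+1) = (3/2) * (3/2)^i := by ring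
      rw [this]
      push_cast
      nlinarith [hmul]

private lemma hc0phi : 2*(k:ℝ)/((k:ℝ)+1) < φ := by
  have hbig : ((k:ℝ)+1)/2 < φ^k := by
    calc ((k:ℝ)+1)/2 < (3/2)^k := hhalfpow k hk φ hφ1 hφ2 hroot k hk
    _ ≤ φ^k := pow_le_pow_left₀ (by norm_num) (le_of_lt (h32 k hk φ hφ1 hφ2 hroot)) k
  have hpk' := hpk k hk φ hφ1 hφ2 hroot
  have hk0 : (0:ℝ) < (k:ℝ) + 1 := by positivity
  have hφk0 : (0:ℝ) < φ^k := by positivity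
  rw [div_lt_iff₀ hk0]
  nlinarith

private lemma gphi : gfun k φ = 1 := by
  have hpk' := hpk k hk φ hφ1 hφ2 hroot
  unfold gfun
  rw [pow_succ]
  nlinarith [hpk']

private lemma gge1 (r : ℝ) (h1 : 1 ≤ r) (h2 : r ≤ φ) : 1 ≤ gfun k r := by
  set c0 := 2*(k:ℝ)/((k:ℝ)+1) with hc0
  have hc0φ := hc0phi k hk φ hφ1 hφ2 hroot
  rcases le_or_gt r c0 with h | h
  · rcases eq_or_lt_of_le h1 with he | hlt
    · rw [← he]; unfold gfun; norm_num
    · have := gmono k hk (Set.mem_Icc.2 ⟨le_refl _, le_of_lt (hc01 k hk)⟩)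
        (Set.mem_Icc.2 ⟨h1, h⟩) hlt
      have g1 : gfun k 1 = 1 := by unfold gfun; norm_num
      linarith [this, g1 ▸ this]
  · rcases eq_or_lt_of_le h2 with he | hlt
    · rw [he, gphi k hk φ hφ1 hφ2 hroot]
    · have := ganti k hk (Set.mem_Ici.2 (le_of_lt h)) (Set.mem_Ici.2 (le_of_lt hc0φ)) hlt
      rw [gphi k hk φ hφ1 hφ2 hroot] at this
      linarith

private lemma ggt1 (r : ℝ) (h1 : 1 < r) (h2 : r < φ) : 1 < gfun k r := by
  set c0 := 2*(k:ℝ)/((k:ℝ)+1) with hc0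
  have hc0φ := hc0phi k hk φ hφ1 hφ2 hroot
  rcases le_or_gt r c0 with h | h
  · have := gmono k hk (Set.mem_Icc.2 ⟨le_refl _, le_of_lt (hc01 k hk)⟩)
      (Set.mem_Icc.2 ⟨le_of_lt h1, h⟩) h1
    have g1 : gfun k 1 = 1 := by unfold gfun; norm_num
    linarith [g1 ▸ this]
  · have := ganti k hk (Set.mem_Ici.2 (le_of_lt h)) (Set.mem_Ici.2 (le_of_lt hc0φ)) h2
    rw [gphi k hk φ hφ1 hφ2 hroot] at this
    linarith

private lemma glt1 (r : ℝ) (h2 : φ < r) : gfun k r < 1 := by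
  have hc0φ := hc0phi k hk φ hφ1 hφ2 hroot
  have := ganti k hk (Set.mem_Ici.2 (le_of_lt hc0φ)) (Set.mem_Ici.2 (le_of_lt (lt_trans hc0φ h2))) h2
  rw [gphi k hk φ hφ1 hφ2 hroot] at this
  linarith

end

section
variable (k : ℕ) (hk : 2 ≤ k) (φ : ℝ) (hφ1 : 1 < φ) (hφ2 : φ < 2)
  (hroot : ∑ i ∈ Finset.range k, φ ^ i = φ ^ k)
include hk hφ1 hφ2 hroot

private lemma root_small (ψ : ℂ) (hψ : ψ^k = ∑ j ∈ Finset.range k, ψ^j)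
    (hne : ψ ≠ (φ:ℂ)) : ‖ψ‖ < 1 := by
  by_contra hcon
  push_neg at hcon
  set r := ‖ψ‖ with hr
  have hr1 : 1 ≤ r := hcon
  have hr0 : 0 < r := lt_of_lt_of_le one_pos hr1
  -- ψ^k * (2 - ψ) = 1
  have hP : ψ^k * (2 - ψ) = 1 := by
    have h := geom_sum_mul ψ k
    rw [← hψ] at h
    linear_combination -h
  -- r ≤ φ
  have hrφ : r ≤ φ := by
    by_contra hgt
    push_neg at hgt
    have h1 : r^k ≤ ∑ j ∈ Finset.range k, r^j := by
      calc r^k = ‖ψ^k‖ := by rw [norm_pow]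
      _ = ‖∑ j ∈ Finset.range k, ψ^j‖ := by rw [hψ]
      _ ≤ ∑ j ∈ Finset.range k, ‖ψ^j‖ := norm_sum_le _ _
      _ = ∑ j ∈ Finset.range k, r^j := by simp [norm_pow, hr]
    have h2 : ∑ j ∈ Finset.range k, r^j < r^k := by
      have hg := glt1 k hk φ hφ1 hφ2 hroot r hgt
      unfold gfun at hg
      have hgs := geom_sum_mul r k
      have hrpos : 0 < r - 1 := by linarith [lt_trans hφ1 hgt]
      have hps : r^(k+1) = r^k * r := pow_succ r k
      nlinarith [hg, hgs, hrpos, hps]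
    linarith
  have h2r : (0:ℝ) ≤ 2 - r := by linarith
  have hmod : r^k * ‖2-ψ‖ = 1 := by
    have := congrArg norm hP
    rwa [norm_mul, norm_pow, norm_one] at this
  have hrk : 0 < r^k := by positivity
  rcases eq_or_ne ψ.im 0 with him | him
  · -- ψ is real
    have hψre : ψ = (ψ.re : ℂ) := by
      apply Complex.ext <;> simp [him]
    rcases le_or_gt 0 ψ.re with hre | hre
    · have habsre : ‖ψ‖ = |ψ.re| := by
        conv_lhs => rw [hψre]
        exact Complex.norm_real _
      have hrre : r = ψ.re := by rw [hr, habsre, abs_of_nonneg hre]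
      have hψr : ψ = (r:ℂ) := by rw [hψre, ← hrre]
      have hneφ : r ≠ φ := by
        intro h
        exact hne (by rw [hψr, h])
      have hreal : r^k = ∑ j ∈ Finset.range k, r^j := by
        have h := hψ
        rw [hψr] at h
        exact_mod_cast h
      rcases eq_or_lt_of_le hr1 with h1 | h1
      · rw [← h1] at hreal
        simp at hreal
        have : k = 1 := by exact_mod_cast hreal.symm
        omega
      · have hlt : r < φ := lt_of_le_of_ne hrφ hneφ
        have hg := ggt1 k hk φ hφ1 hφ2 hroot r h1 hlt
        unfold gfun at hg
        have hgs := geom_sum_mul r k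
        rw [← hreal] at hgs
        have hps : r^(k+1) = r^k * r := pow_succ r k
        nlinarith [hg, hgs, hps]
    · have habsre : ‖ψ‖ = |ψ.re| := by
        conv_lhs => rw [hψre]
        exact Complex.norm_real _
      have hrre : r = -ψ.re := by rw [hr, habsre, abs_of_neg hre]
      have habs2 : ‖2 - ψ‖ = 2 + r := by
        rw [hψre]
        have : (2:ℂ) - (ψ.re:ℂ) = ((2 - ψ.re : ℝ):ℂ) := by push_cast; ring
        rw [this, Complex.norm_real, Real.norm_eq_abs, abs_of_pos (by linarith)]
        linarith
      rw [habs2] at hmod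
      have : (1:ℝ) ≤ r^k := by
        calc (1:ℝ) = 1^k := (one_pow k).symm
        _ ≤ r^k := pow_le_pow_left₀ (by norm_num) hr1 k
      nlinarith
  · -- ψ is not real
    have hre_lt : ψ.re < r := by
      have h1 : |ψ.re| < r := Complex.abs_re_lt_norm.2 him
      have h2 : ψ.re ≤ |ψ.re| := le_abs_self _
      linarith
    have hsq : (‖2-ψ‖)^2 = (2 - ψ.re)^2 + ψ.im^2 := by
      rw [Complex.sq_norm, Complex.normSq_apply]
      simp
      ring
    have hsqr : r^2 = ψ.re^2 + ψ.im^2 := by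
      rw [hr, Complex.sq_norm, Complex.normSq_apply]
      ring
    have habs2 : 2 - r < ‖2 - ψ‖ := by
      apply lt_of_pow_lt_pow_left₀ 2 (norm_nonneg _)
      rw [hsq]
      nlinarith [hre_lt, hsqr]
    have hg := gge1 k hk φ hφ1 hφ2 hroot r hr1 hrφ
    unfold gfun at hg
    have hps : r^(k+1) = r^k * r := pow_succ r k
    nlinarith [hmod, habs2, hg, hps, hrk]

end

open Polynomial

section
variable (k : ℕ) (hk : 2 ≤ k)

private noncomputable def pZ : ℤ[X] := X^k - ∑ j ∈ Finset.range k, (X:ℤ[X])^j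

private lemma pZ_monic : (pZ k).Monic := by
  apply monic_X_pow_sub
  apply lt_of_le_of_lt (degree_sum_le _ _)
  rw [Finset.sup_lt_iff (by exact_mod_cast WithBot.bot_lt_coe k)]
  intro j hj
  rw [degree_X_pow]
  exact_mod_cast Finset.mem_range.1 hj

private lemma pZ_aeval_complex (ψ : ℂ) :
    Polynomial.aeval ψ (pZ k) = ψ^k - ∑ j ∈ Finset.range k, ψ^j := by
  simp [pZ]

private lemma pZ_aeval_real (x : ℝ) :
    Polynomial.aeval x (pZ k) = x^k - ∑ j ∈ Finset.range k, x^j := by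
  simp [pZ]

private lemma pZ_natDegree (hk1 : 1 ≤ k) : (pZ k).natDegree = k := by
  unfold pZ
  have hs : (∑ j ∈ Finset.range k, (X:ℤ[X])^j).natDegree < k := by
    apply lt_of_le_of_lt (Polynomial.natDegree_sum_le_of_forall_le _ _ (n := k-1) ?_) (by omega)
    intro j hj
    rw [natDegree_X_pow]
    have := Finset.mem_range.1 hj
    omega
  rw [natDegree_sub_eq_left_of_natDegree_lt (by rwa [natDegree_X_pow]), natDegree_X_pow]

private lemma pZ_eval_zero (hk1 : 1 ≤ k) : (pZ k).eval 0 = -1 := by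
  unfold pZ
  simp [eval_finset_sum]
  rw [if_neg (by omega), zero_pow (by omega)]
  norm_num

private lemma pZ_mul_identity : ((X:ℤ[X]) - 1) * pZ k = X^(k+1) - 2*X^k + 1 := by
  unfold pZ
  have hgs : (∑ j ∈ Finset.range k, (X:ℤ[X])^j) * (X - 1) = X^k - 1 := geom_sum_mul _ _
  have : ((X:ℤ[X]) - 1) * (X^k - ∑ j ∈ Finset.range k, (X:ℤ[X])^j)
      = (X - 1)*X^k - (∑ j ∈ Finset.range k, (X:ℤ[X])^j) * (X-1) := by ring
  rw [this, hgs]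
  ring

private lemma pZ_deriv_ne (φ : ℝ) (hφ1 : 1 < φ) (hc0 : 2*(k:ℝ)/((k:ℝ)+1) < φ)
    (haev : Polynomial.aeval φ (pZ k) = 0) (hk1 : 1 ≤ k) :
    Polynomial.aeval φ (derivative (pZ k)) ≠ 0 := by
  have hd := congrArg (fun q : ℤ[X] => Polynomial.aeval φ (derivative q)) (pZ_mul_identity k)
  simp only [derivative_mul, derivative_sub, derivative_add, derivative_one, derivative_X,
    derivative_X_pow, map_add, map_sub, map_mul, map_one, map_pow, aeval_X, map_ofNat,
    Polynomial.aeval_C] at hd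
  -- hd should now be an equation in ℝ
  have hφk1 : 0 < φ^(k-1) := by positivity
  have hgt : 2*(k:ℝ) < ((k:ℝ)+1) * φ := by
    rw [div_lt_iff₀ (by positivity)] at hc0
    nlinarith
  intro h0
  rw [haev, h0] at hd
  simp at hd
  have hφk : φ^k = φ^(k-1) * φ := by
    conv_lhs => rw [show k = (k-1)+1 by omega]
    ring
  nlinarith [hd, hφk1, hgt, hφk]
end

private lemma multiset_prod_lt_one (s : Multiset ℝ) (h0 : s ≠ 0)
    (h : ∀ x ∈ s, 0 ≤ x ∧ x < 1) : s.prod < 1 := by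
  induction s using Multiset.induction with
  | empty => simp at h0
  | cons a t ih =>
    rw [Multiset.prod_cons]
    rcases h a (Multiset.mem_cons_self a t) with ⟨ha0, ha1⟩
    rcases eq_or_ne t 0 with ht | ht
    · simp [ht]; linarith
    · have hprod := ih ht (fun x hx => h x (Multiset.mem_cons_of_mem hx))
      have tnonneg : 0 ≤ t.prod := Multiset.prod_nonneg (fun x hx => (h x (Multiset.mem_cons_of_mem hx)).1)
      nlinarith

section
variable (k : ℕ) (hk : 2 ≤ k) (φ : ℝ) (hφ1 : 1 < φ) (hφ2 : φ < 2)
  (hroot : ∑ i ∈ Finset.range k, φ ^ i = φ ^ k)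
include hk hφ1 hφ2 hroot

private lemma pZ_aeval_phi : Polynomial.aeval φ (pZ k) = 0 := by
  rw [pZ_aeval_real, hroot]; ring

private lemma phi_integral : IsIntegral ℤ φ :=
  ⟨pZ k, pZ_monic k, by rw [← Polynomial.aeval_def]; exact pZ_aeval_phi k hk φ hφ1 hφ2 hroot⟩

private lemma minpoly_eq_pZ : minpoly ℤ φ = pZ k := by
  have hint := phi_integral k hk φ hφ1 hφ2 hroot
  have haev := pZ_aeval_phi k hk φ hφ1 hφ2 hroot
  obtain ⟨h, hph⟩ := minpoly.isIntegrallyClosed_dvd hint haev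
  have hqm : (minpoly ℤ φ).Monic := minpoly.monic hint
  have hpm := pZ_monic k
  have hhm : h.Monic := hqm.of_mul_monic_left (hph ▸ hpm)
  have hhφ : Polynomial.aeval φ h ≠ 0 := by
    intro h0
    obtain ⟨g, hg⟩ := minpoly.isIntegrallyClosed_dvd hint h0
    have hD := pZ_deriv_ne k φ hφ1 (hc0phi k hk φ hφ1 hφ2 hroot) haev (by omega)
    apply hD
    rw [hph, hg]
    simp only [derivative_mul, map_add, map_mul]
    rw [minpoly.aeval]
    ring
  by_cases hh1 : h.natDegree = 0
  · have : h = 1 := hhm.natDegree_eq_zero.mp hh1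
    rw [hph, this, mul_one]
  · exfalso
    set hC : ℂ[X] := h.map (Int.castRingHom ℂ) with hhC
    have hCm : hC.Monic := hhm.map _
    have hCdeg : hC.natDegree = h.natDegree := hhm.natDegree_map _
    have hCsplits : Splits hC := IsAlgClosed.splits hC
    have hCroots : hC.natDegree = Multiset.card hC.roots := by
      exact hCsplits.natDegree_eq_card_roots
    -- every root of hC has absolute value < 1
    have hsm : ∀ ψ ∈ hC.roots, ‖ψ‖ < 1 := by
      intro ψ hψm
      have hψr : Polynomial.aeval ψ h = 0 := by
        rw [Polynomial.aeval_def, ← Polynomial.eval_map]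
        exact (Polynomial.isRoot_of_mem_roots hψm)
      have hpψ : Polynomial.aeval ψ (pZ k) = 0 := by
        rw [hph, map_mul, hψr, mul_zero]
      have hψk : ψ^k = ∑ j ∈ Finset.range k, ψ^j := by
        rw [pZ_aeval_complex] at hpψ
        linear_combination hpψ
      apply root_small k hk φ hφ1 hφ2 hroot ψ hψk
      intro hψφ
      apply hhφ
      have hφC : Polynomial.aeval ((φ:ℂ)) h = 0 := by rw [← hψφ]; exact hψr
      have := Polynomial.aeval_algebraMap_apply ℂ φ h
      rw [Complex.coe_algebraMap] at this
      rw [hφC] at this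
      exact_mod_cast this.symm
    -- eval at 0
    have hint_eval : (minpoly ℤ φ).eval 0 * h.eval 0 = -1 := by
      rw [← Polynomial.eval_mul, ← hph, pZ_eval_zero k (by omega)]
    have hdvd0 : h.eval 0 ∣ (-1 : ℤ) := Dvd.intro_left _ hint_eval
    have hunit : IsUnit (h.eval 0) := isUnit_of_dvd_unit hdvd0 isUnit_one.neg
    have habs1 : h.eval 0 = 1 ∨ h.eval 0 = -1 := Int.isUnit_iff.mp hunit |>.imp id id
    have habsC : ‖hC.eval 0‖ = 1 := by
      have he : hC.eval 0 = ((h.eval 0 : ℤ) : ℂ) := by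
        rw [hhC, Polynomial.eval_map, Polynomial.eval₂_at_zero,
          ← Polynomial.coeff_zero_eq_eval_zero]
        simp
      rcases habs1 with h1 | h1 <;> rw [he, h1] <;> simp
    -- product formula
    have hprodform := hCsplits.eq_prod_roots_of_monic hCm
    have hev : hC.eval 0 = (hC.roots.map (fun a => 0 - a)).prod := by
      conv_lhs => rw [hprodform]
      rw [Polynomial.eval_multiset_prod]
      rw [Multiset.map_map]
      congr 1
      apply Multiset.map_congr rfl
      intro x hx
      simp
    have habsprod : ‖hC.eval 0‖ = (hC.roots.map (fun a => ‖a‖)).prod := by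
      rw [hev]
      rw [show ∀ s : Multiset ℂ, ‖s.prod‖ = (s.map (fun a => ‖a‖)).prod from fun s => (Multiset.prod_hom s (normHom : ℂ →*₀ ℝ)).symm]
      rw [Multiset.map_map]
      congr 1
      apply Multiset.map_congr rfl
      intro x hx
      simp
    have hne0 : hC.roots.map (fun a => ‖a‖) ≠ 0 := by
      intro hcon
      have := Multiset.card_eq_zero.2 hcon
      rw [Multiset.card_map] at this
      rw [← hCroots] at this
      omega
    have hlt := multiset_prod_lt_one (hC.roots.map (fun a => ‖a‖)) hne0 ?_
    · rw [← habsprod, habsC] at hlt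
      exact lt_irrefl _ hlt
    · intro x hx
      rw [Multiset.mem_map] at hx
      obtain ⟨a, ha, rfl⟩ := hx
      exact ⟨norm_nonneg a, hsm a ha⟩

end

section
variable (k : ℕ) (hk : 2 ≤ k) (φ : ℝ) (hφ1 : 1 < φ) (hφ2 : φ < 2)
  (hroot : ∑ i ∈ Finset.range k, φ ^ i = φ ^ k)
include hk hφ1 hφ2 hroot

private lemma no_eq_case (m n' : ℕ) (hm : 2 ≤ m)
    (heq : φ^(n'+1) = φ^n' + m) : False := by
  have hint := phi_integral k hk φ hφ1 hφ2 hroot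
  have hQ : minpoly ℚ φ = (pZ k).map (algebraMap ℤ ℚ) := by
    rw [minpoly.isIntegrallyClosed_eq_field_fractions' ℚ hint,
      minpoly_eq_pZ k hk φ hφ1 hφ2 hroot]
  set R : ℚ[X] := X^(n'+1) - (X^n' + C (m:ℚ)) with hR
  have hRaev : Polynomial.aeval φ R = 0 := by
    rw [hR]
    simp only [map_sub, map_add, map_pow, aeval_X, aeval_C]
    have : (algebraMap ℚ ℝ) ((m:ℚ)) = (m:ℝ) := by norm_num
    rw [this]
    linarith [heq]
  have hdvdR : minpoly ℚ φ ∣ R := minpoly.dvd ℚ φ hRaev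
  set pC : ℂ[X] := (pZ k).map (Int.castRingHom ℂ) with hpC
  have hCm : Monic pC := (pZ_monic k).map _
  have hCdeg : pC.natDegree = k := by
    rw [hpC, (pZ_monic k).natDegree_map, pZ_natDegree k (by omega)]
  have hsplits : Splits pC := IsAlgClosed.splits _
  have hcard : Multiset.card pC.roots = k := by
    have := hsplits.natDegree_eq_card_roots
    omega
  have hpC_eval_zero : pC.eval 0 = -1 := by
    rw [hpC, Polynomial.eval_map, Polynomial.eval₂_at_zero,
      Polynomial.coeff_zero_eq_eval_zero, pZ_eval_zero k (by omega)]
    simp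
  have hex : ∃ ψ ∈ pC.roots, ψ ≠ ((φ:ℂ)) := by
    by_contra hcon
    push_neg at hcon
    have hrep : pC.roots = Multiset.replicate k ((φ:ℂ)) := Multiset.eq_replicate.2 ⟨hcard, hcon⟩
    have hform := hsplits.eq_prod_roots_of_monic hCm
    rw [hrep, Multiset.map_replicate, Multiset.prod_replicate] at hform
    rw [hform] at hpC_eval_zero
    have habs := congrArg norm hpC_eval_zero
    rw [Polynomial.eval_pow, Polynomial.eval_sub, Polynomial.eval_X, Polynomial.eval_C,
      norm_pow] at habs
    have h1 : ‖0 - (φ:ℂ)‖ = φ := by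
      rw [zero_sub, norm_neg, Complex.norm_real, Real.norm_eq_abs, abs_of_pos (by linarith)]
    rw [h1] at habs
    simp at habs
    have : (1:ℝ) < φ^k := one_lt_pow₀ hφ1 (by omega)
    rw [habs] at this
    linarith
  obtain ⟨ψ, hψm, hψne⟩ := hex
  have hψroot : Polynomial.aeval ψ (pZ k) = 0 := by
    rw [Polynomial.aeval_def, ← Polynomial.eval_map]
    exact Polynomial.isRoot_of_mem_roots hψm
  have hψk : ψ^k = ∑ j ∈ Finset.range k, ψ^j := by
    rw [pZ_aeval_complex] at hψroot
    linear_combination hψroot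
  have hsmall := root_small k hk φ hφ1 hφ2 hroot ψ hψk hψne
  have hdvdC : pC ∣ R.map (algebraMap ℚ ℂ) := by
    have h1 : (minpoly ℚ φ).map (algebraMap ℚ ℂ) ∣ R.map (algebraMap ℚ ℂ) :=
      Polynomial.map_dvd _ hdvdR
    rw [hQ, Polynomial.map_map] at h1
    have h2 : (algebraMap ℚ ℂ).comp (algebraMap ℤ ℚ) = Int.castRingHom ℂ :=
      RingHom.ext_int _ _
    rwa [h2] at h1
  have hRψ : Polynomial.eval ψ (R.map (algebraMap ℚ ℂ)) = 0 := by
    obtain ⟨t, ht⟩ := hdvdC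
    have hψ0 : Polynomial.eval ψ pC = 0 := Polynomial.isRoot_of_mem_roots hψm
    rw [ht, Polynomial.eval_mul, hψ0, zero_mul]
  have heqC : ψ^(n'+1) - (ψ^n' + (m:ℂ)) = 0 := by
    have : Polynomial.eval ψ (R.map (algebraMap ℚ ℂ)) =
        ψ^(n'+1) - (ψ^n' + (m:ℂ)) := by
      rw [hR]
      simp
    rw [← this]
    exact hRψ
  have h1 : (m:ℂ) = ψ^n' * (ψ - 1) := by
    have hpow : ψ^(n'+1) = ψ^n' * ψ := pow_succ ψ n'
    linear_combination hpow - heqC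
  have habsm : (m:ℝ) = ‖ψ‖^n' * ‖ψ - 1‖ := by
    have := congrArg norm h1
    rwa [norm_mul, norm_pow, Complex.norm_natCast] at this
  have hb1 : ‖ψ‖^n' ≤ 1 := pow_le_one₀ (norm_nonneg _) (le_of_lt hsmall)
  have hb2 : ‖ψ - 1‖ ≤ ‖ψ‖ + 1 := by
    have := norm_add_le ψ (-1)
    simpa [sub_eq_add_neg] using this
  have hb3 : ‖ψ - 1‖ < 2 := by linarith
  have hub : (m:ℝ) < 2 := by
    rw [habsm]
    have hnn : (0:ℝ) ≤ ‖ψ - 1‖ := norm_nonneg _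
    nlinarith [pow_nonneg (norm_nonneg ψ) n']
  have : (2:ℝ) ≤ m := by exact_mod_cast hm
  linarith

end


set_option maxHeartbeats 1000000

/-- For `k ≥ 2` and integers `m > 1`, `n` with `φ_k^{n−1} ≤ m/(φ_k − 1)`, there exists
`N` such that for all `i ≥ N`, `F_k(n+i+k−1) − (∑_{j=0}^{i} F_k(k−1+j))·m ≤ 0`. -/
theorem reach_row_n_eventually_nonpos (k : ℕ) (hk : 2 ≤ k) (F : ℕ → ℕ)
    (hF0 : ∀ i, i < k - 1 → F i = 0) (hF1 : F (k - 1) = 1)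
    (hFrec : ∀ n, F (n + k) = ∑ j ∈ Finset.range k, F (n + j))
    (φ : ℝ) (hφ : φ ∈ Set.Ioo (1 : ℝ) 2)
    (hroot : ∑ i ∈ Finset.range k, φ ^ i = φ ^ k)
    (hasymp : ∃ c : ℝ, 0 < c ∧
      Filter.Tendsto (fun j => (F j : ℝ) / φ ^ j) Filter.atTop (nhds c))
    (m : ℕ) (hm : 1 < m) (n : ℕ) (hn : φ ^ ((n : ℤ) - 1) ≤ (m : ℝ) / (φ - 1)) :
    ∃ N : ℕ, ∀ i, N ≤ i →
      (F (n + i + k - 1) : ℝ) - (∑ j ∈ Finset.range (i + 1), (F (k - 1 + j) : ℝ)) * m ≤ 0 := by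
  obtain ⟨hφ1, hφ2⟩ := hφ
  obtain ⟨c, hc, hlim⟩ := hasymp
  have hφ0 : (0:ℝ) < φ := lt_trans one_pos hφ1
  have hφne : φ ≠ 0 := ne_of_gt hφ0
  have hφne1 : φ ≠ 1 := ne_of_gt hφ1
  have hφm1 : (0:ℝ) < φ - 1 := sub_pos.2 hφ1
  have hm2 : (2:ℝ) ≤ (m:ℝ) := by exact_mod_cast hm
  set β := φ ^ ((n:ℤ)-1) with hβ
  have hβpos : 0 < β := zpow_pos hφ0 _
  -- strict inequality
  have hstrict : β * (φ - 1) < m := by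
    have hle : β * (φ-1) ≤ m := by
      rw [← le_div_iff₀ hφm1]
      exact hn
    rcases lt_or_eq_of_le hle with h | h
    · exact h
    · exfalso
      rcases Nat.eq_zero_or_pos n with hn0 | hn0
      · subst hn0
        have hβi : β = φ⁻¹ := by
          rw [hβ]
          norm_num
        rw [hβi] at h
        have hlt1 : φ⁻¹ * (φ - 1) < 1 := by
          rw [inv_mul_lt_iff₀ hφ0]
          linarith
        rw [h] at hlt1
        linarith
      · obtain ⟨n', rfl⟩ : ∃ n', n = n'+1 := ⟨n-1, by omega⟩
        have hβn : β = φ^n' := by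
          rw [hβ]
          have hcast : ((n'+1:ℕ):ℤ) - 1 = (n':ℤ) := by push_cast; ring
          rw [hcast, zpow_natCast]
        rw [hβn] at h
        apply no_eq_case k hk φ hφ1 hφ2 hroot m n' hm
        have hps : φ^(n'+1) = φ^n' * φ := pow_succ φ n'
        nlinarith [h, hps]
  -- analytic part
  set a := β * (φ-1) with ha
  have ha0 : 0 < a := mul_pos hβpos hφm1
  have hma : 0 < (m:ℝ) - a := by linarith
  set ε := c * ((m:ℝ) - a) / (2 * ((m:ℝ) + a)) with hε
  have hε0 : 0 < ε := by
    apply div_pos (mul_pos hc hma)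
    positivity
  have hεc : ε < c := by
    rw [hε, div_lt_iff₀ (by positivity)]
    nlinarith
  set δ := c * ((m:ℝ) - a) / 2 with hδdef
  have hδ0 : 0 < δ := by positivity
  have hδ : (m:ℝ)*(c - ε) - (c + ε)*a = δ := by
    rw [hδdef, hε]
    field_simp
    ring
  obtain ⟨J, hJ⟩ := Metric.tendsto_atTop.mp hlim ε hε0
  have hbounds : ∀ j, J ≤ j → (c - ε) * φ^j ≤ (F j : ℝ) ∧ (F j : ℝ) ≤ (c + ε) * φ^j := by
    intro j hj
    have hd := hJ j hj
    rw [Real.dist_eq, abs_lt] at hd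
    have hp : (0:ℝ) < φ^j := by positivity
    constructor
    · have h2 : c - ε < (F j:ℝ)/φ^j := by linarith [hd.1]
      calc (c-ε)*φ^j ≤ ((F j:ℝ)/φ^j)*φ^j := by nlinarith [h2]
      _ = (F j:ℝ) := by field_simp
    · have h2 : (F j:ℝ)/φ^j < c + ε := by linarith [hd.2]
      calc (F j:ℝ) = ((F j:ℝ)/φ^j)*φ^j := by field_simp
      _ ≤ (c+ε)*φ^j := by nlinarith [h2]
  have hgrow := tendsto_pow_atTop_atTop_of_one_lt hφ1
  obtain ⟨N2, hN2⟩ := Filter.eventually_atTop.mp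
    (hgrow.eventually_ge_atTop ((m:ℝ)*c*φ^(k-1+J)/δ))
  refine ⟨max (J+1) N2, ?_⟩
  intro i hi
  have hiJ : J + 1 ≤ i := le_trans (le_max_left _ _) hi
  have hiN2 : N2 ≤ i := le_trans (le_max_right _ _) hi
  set A := φ^(i+k) with hA
  set B := φ^(k-1+J) with hB
  have hApos : 0 < A := by positivity
  have hBpos : 0 < B := by positivity
  -- growth bound
  have hgrowth : (m:ℝ)*c*B ≤ δ * A := by
    have h1 : (m:ℝ)*c*B/δ ≤ φ^i := hN2 i hiN2
    have h2 : φ^i ≤ A := by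
      rw [hA]
      exact pow_le_pow_right₀ (le_of_lt hφ1) (by omega)
    rw [div_le_iff₀ hδ0] at h1
    have h3 : δ * φ^i ≤ δ * A := mul_le_mul_of_nonneg_left h2 (le_of_lt hδ0)
    calc (m:ℝ)*c*B ≤ δ * φ^i := by linarith [h1]
    _ ≤ δ * A := h3
  -- upper bound on F term
  have hidx : φ^(n+i+k-1) = β * A := by
    have h1 : ((n+i+k-1 : ℕ) : ℤ) = ((n:ℤ)-1) + ((i+k : ℕ) : ℤ) := by
      push_cast [Nat.cast_sub (show 1 ≤ n+i+k by omega)]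
      ring
    have h2 : φ^((n+i+k-1 : ℕ) : ℤ) = φ^(((n:ℤ)-1) + ((i+k : ℕ) : ℤ)) := by rw [h1]
    rw [zpow_add₀ hφne, zpow_natCast, zpow_natCast] at h2
    rw [← hβ] at h2
    exact h2
  have hFup : (F (n+i+k-1) : ℝ) ≤ (c+ε) * (β * A) := by
    rw [← hidx]
    exact (hbounds (n+i+k-1) (by omega)).2
  -- lower bound on the sum
  set S := ∑ j ∈ Finset.range (i+1), (F (k-1+j) : ℝ) with hS
  have hsub : Finset.Ico J (i+1) ⊆ Finset.range (i+1) := by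
    rw [Finset.range_eq_Ico]
    exact Finset.Ico_subset_Ico (Nat.zero_le _) (le_refl _)
  have hS1 : ∑ j ∈ Finset.Ico J (i+1), (F (k-1+j) : ℝ) ≤ S := by
    apply Finset.sum_le_sum_of_subset_of_nonneg hsub
    intro j _ _
    positivity
  have hS2 : (c-ε) * ((A - B)/(φ-1)) ≤ ∑ j ∈ Finset.Ico J (i+1), (F (k-1+j) : ℝ) := by
    have hterm : ∀ j ∈ Finset.Ico J (i+1), (c-ε) * φ^(k-1+j) ≤ (F (k-1+j) : ℝ) := by
      intro j hj
      exact (hbounds (k-1+j) (by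
        have := (Finset.mem_Ico.1 hj).1
        omega)).1
    calc (c-ε) * ((A - B)/(φ-1))
        = ∑ j ∈ Finset.Ico J (i+1), (c-ε) * φ^(k-1+j) := by
          rw [← Finset.mul_sum]
          congr 1
          have hgs : ∑ j ∈ Finset.Ico J (i+1), φ^j = (φ^(i+1) - φ^J)/(φ-1) :=
            geom_sum_Ico hφne1 (by omega)
          have hfac : ∀ j, φ^(k-1+j) = φ^(k-1) * φ^j := fun j => pow_add φ (k-1) j
          rw [Finset.sum_congr rfl (fun j _ => hfac j), ← Finset.mul_sum, hgs]
          rw [hA, hB]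
          have e1 : φ^(k-1) * φ^(i+1) = φ^(i+k) := by
            rw [← pow_add]
            congr 1
            omega
          have e2 : φ^(k-1) * φ^J = φ^(k-1+J) := by rw [← pow_add]
          field_simp
          rw [← e1, ← e2]
          ring
    _ ≤ ∑ j ∈ Finset.Ico J (i+1), (F (k-1+j) : ℝ) := Finset.sum_le_sum hterm
  have hSlow : (c-ε) * ((A - B)/(φ-1)) ≤ S := le_trans hS2 hS1
  -- key algebraic inequality
  have hkey : (c+ε) * (β * A) ≤ ((c-ε) * ((A - B)/(φ-1))) * m := by
    have hrhs : ((c-ε) * ((A - B)/(φ-1))) * m = ((c-ε) * (A - B) * m)/(φ-1) := by ring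
    rw [hrhs, le_div_iff₀ hφm1]
    have hexp : (c+ε) * (β * A) * (φ-1) = (c+ε) * a * A := by rw [ha]; ring
    rw [hexp]
    have hεB : (m:ℝ)*(c-ε)*B ≤ (m:ℝ)*c*B := by
      nlinarith [mul_pos (mul_pos (show (0:ℝ) < (m:ℝ) by linarith) hε0) hBpos]
    nlinarith [hδ, hgrowth, hεB, hApos]
  have hfinal : (F (n+i+k-1) : ℝ) ≤ S * m := by
    calc (F (n+i+k-1) : ℝ) ≤ (c+ε) * (β * A) := hFup
    _ ≤ ((c-ε) * ((A - B)/(φ-1))) * m := hkey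
    _ ≤ S * m := by
      apply mul_le_mul_of_nonneg_right hSlow
      positivity
  linarith
end
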